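/- The B^r norm is the largest seminorm |·|' on Dirac k-chains satisfying both |A|' ≤ ‖A‖_{B^0} for all A, and |Δ_u A|' ≤ ‖u‖·‖A‖_{B^{r-1}} for all A and u ∈ ℝⁿ, for every r ≥ 1. -/

import Mathlib

noncomputable section

open Finsupp Filter Pointwise

variable {E W : Type*} [NormedAddCommGroup E] [NormedSpace ℝ E]
  [NormedAddCommGroup W] [NormedSpace ℝ W]

/-- Translation of a Dirac chain through the vector `u`. -/
def transl (u : E) (A : E →₀ W) : E →₀ W := Finsupp.mapDomain (· + u) A

/-- The difference operator `Δ_u = T_u - I`. -/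
def del (u : E) (A : E →₀ W) : E →₀ W := transl u A - A

/-- Iterated difference chain along a list of vectors. -/
def diff : List E → (E →₀ W) → (E →₀ W)
  | [], A => A
  | u :: σ, A => del u (diff σ A)

/-- The product of the norms of the vectors in the list `σ`. -/
def lnorm (σ : List E) : ℝ := (σ.map norm).prod

/-- Costs of representations of `A` as sums of `j`-difference chains with `j ≤ r`. -/
def reps (r : ℕ) (A : E →₀ W) : Set ℝ :=
  {c | ∃ (m : ℕ) (σ : Fin m → List E) (p : Fin m → E) (α : Fin m → W),
      (∀ i, (σ i).length ≤ r) ∧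
      A = ∑ i, diff (σ i) (Finsupp.single (p i) (α i)) ∧
      c = ∑ i, lnorm (σ i) * ‖α i‖}

/-- The `B^r` norm of a Dirac chain. -/
def Bnorm (r : ℕ) (A : E →₀ W) : ℝ := sInf (reps r A)

/-- `M` is a `B^r`-bound for the cochain (differential form) `ω`. -/
def IsFormBound (r : ℕ) (ω : (E →₀ W) →ₗ[ℝ] ℝ) (M : ℝ) : Prop :=
  ∀ (σ : List E) (p : E) (α : W), σ.length ≤ r →
    |ω (diff σ (Finsupp.single p α))| ≤ M * lnorm σ * ‖α‖

/-- The `B^r` norm of a differential form. -/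
def formNorm (r : ℕ) (ω : (E →₀ W) →ₗ[ℝ] ℝ) : ℝ :=
  sInf {M | 0 ≤ M ∧ IsFormBound r ω M}

lemma lnorm_nonneg (σ : List E) : 0 ≤ lnorm σ := by
  apply List.prod_nonneg
  intro x hx
  simp only [List.mem_map] at hx
  obtain ⟨a, -, rfl⟩ := hx
  exact norm_nonneg a

lemma lnorm_cons (u : E) (σ : List E) : lnorm (u :: σ) = ‖u‖ * lnorm σ := by
  simp [lnorm]

lemma reps_nonneg {r : ℕ} {A : E →₀ W} : ∀ c ∈ reps r A, 0 ≤ c := by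
  rintro c ⟨m, σ, p, α, -, -, rfl⟩
  exact Finset.sum_nonneg fun i _ =>
    mul_nonneg (lnorm_nonneg _) (norm_nonneg _)

lemma reps_bddBelow {r : ℕ} {A : E →₀ W} : BddBelow (reps r A) :=
  ⟨0, fun c hc => reps_nonneg c hc⟩

lemma reps_nonempty (r : ℕ) (A : E →₀ W) : (reps r A).Nonempty := by
  classical
  refine ⟨_, A.support.card, fun _ => [], fun i => (A.support.equivFin.symm i : E),
    fun i => A (A.support.equivFin.symm i : E), fun _ => Nat.zero_le r, ?_, rfl⟩
  have : ∀ i : Fin A.support.card,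
      diff ([] : List E) (Finsupp.single ((A.support.equivFin.symm i : E))
        (A (A.support.equivFin.symm i : E)))
      = Finsupp.single ((A.support.equivFin.symm i : E)) (A (A.support.equivFin.symm i : E)) :=
    fun _ => rfl
  simp only [this]
  refine Eq.symm ?_
  rw [Fintype.sum_equiv A.support.equivFin.symm
    (fun i => Finsupp.single ((A.support.equivFin.symm i : E)) (A (A.support.equivFin.symm i : E)))
    (fun x : A.support => Finsupp.single (x : E) (A (x : E))) (fun i => rfl)]
  rw [Finset.sum_coe_sort A.support (fun x => Finsupp.single x (A x))]
  exact Finsupp.sum_single A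

/-- `del u` as a linear map. -/
def delL (u : E) : (E →₀ W) →ₗ[ℝ] (E →₀ W) :=
  Finsupp.lmapDomain W ℝ (· + u) - LinearMap.id

lemma del_eq_delL (u : E) (A : E →₀ W) : del u A = delL u A := rfl

lemma del_sum {m : ℕ} (u : E) (f : Fin m → (E →₀ W)) :
    del u (∑ i, f i) = ∑ i, del u (f i) := by
  simp only [del_eq_delL]
  exact map_sum (delL u) f Finset.univ

lemma Bnorm_nonneg (r : ℕ) (A : E →₀ W) : 0 ≤ Bnorm r A :=
  le_csInf (reps_nonempty r A) reps_nonneg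

lemma seminorm_sum_le {V : Type*} [AddCommGroup V] [Module ℝ V] (s : Seminorm ℝ V)
    {ι : Type*} (t : Finset ι) (f : ι → V) :
    s (∑ i ∈ t, f i) ≤ ∑ i ∈ t, s (f i) := by
  classical
  induction t using Finset.induction with
  | empty => simp
  | insert _ _ h ih =>
    rw [Finset.sum_insert h, Finset.sum_insert h]
    exact (map_add_le_add s _ _).trans (by linarith)

lemma Bnorm_diff_le (r : ℕ) (σ : List E) (p : E) (α : W) (h : σ.length ≤ r) :
    Bnorm r (diff σ (Finsupp.single p α)) ≤ lnorm σ * ‖α‖ := by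
  apply csInf_le reps_bddBelow
  exact ⟨1, fun _ => σ, fun _ => p, fun _ => α, fun _ => h, by simp, by simp⟩

/-- For every `r ≥ 1`, the `B^r` norm is the largest seminorm `|·|'`
on Dirac `k`-chains satisfying `|A|' ≤ ‖A‖_{B^0}` and `|Δ_u A|' ≤ ‖u‖·‖A‖_{B^{r-1}}`:
the `B^r` norm satisfies both conditions, and any seminorm satisfying them is
pointwise `≤` the `B^r` norm. -/
theorem Bnorm_largest_seminorm {n : ℕ} {W : Type*}
    [NormedAddCommGroup W] [NormedSpace ℝ W] (r : ℕ) (hr : 1 ≤ r) :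
    (∀ A : (EuclideanSpace ℝ (Fin n)) →₀ W, Bnorm r A ≤ Bnorm 0 A) ∧
    (∀ (u : EuclideanSpace ℝ (Fin n)) (A : (EuclideanSpace ℝ (Fin n)) →₀ W),
      Bnorm r (del u A) ≤ ‖u‖ * Bnorm (r - 1) A) ∧
    (∀ s : Seminorm ℝ ((EuclideanSpace ℝ (Fin n)) →₀ W),
      (∀ A, s A ≤ Bnorm 0 A) →
      (∀ (u : EuclideanSpace ℝ (Fin n)) (A : (EuclideanSpace ℝ (Fin n)) →₀ W),
        s (del u A) ≤ ‖u‖ * Bnorm (r - 1) A) →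
      ∀ A, s A ≤ Bnorm r A) := by
  set E := EuclideanSpace ℝ (Fin n)
  refine ⟨?_, ?_, ?_⟩
  · -- Bnorm r ≤ Bnorm 0
    intro A
    apply csInf_le_csInf reps_bddBelow (reps_nonempty 0 A)
    rintro c ⟨m, σ, p, α, hlen, hA, hc⟩
    exact ⟨m, σ, p, α, fun i => (hlen i).trans (Nat.zero_le r), hA, hc⟩
  · -- Bnorm r (del u A) ≤ ‖u‖ * Bnorm (r-1) A
    intro u A
    have key : ∀ c ∈ reps (r - 1) A, ‖u‖ * c ∈ reps r (del u A) := by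
      rintro c ⟨m, σ, p, α, hlen, hA, hc⟩
      refine ⟨m, fun i => u :: σ i, p, α, ?_, ?_, ?_⟩
      · intro i
        have := hlen i
        simp only [List.length_cons]
        omega
      · rw [hA, del_sum]
        rfl
      · rw [hc, Finset.mul_sum]
        congr 1
        ext i
        rw [lnorm_cons]
        ring
    have h1 : ‖u‖ * Bnorm (r - 1) A = sInf (‖u‖ • (reps (r - 1) A)) := by
      rw [Real.sInf_smul_of_nonneg (norm_nonneg u)]
      rfl
    rw [show Bnorm r (del u A) = sInf (reps r (del u A)) from rfl, h1]
    apply csInf_le_csInf reps_bddBelow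
    · obtain ⟨c, hc⟩ := reps_nonempty (r - 1) A
      exact ⟨‖u‖ * c, ⟨c, hc, rfl⟩⟩
    · rintro x ⟨c, hc, rfl⟩
      exact key c hc
  · -- largest
    intro s h0 h1 A
    apply le_csInf (reps_nonempty r A)
    rintro c ⟨m, σ, p, α, hlen, hA, hc⟩
    have term : ∀ i : Fin m,
        s (diff (σ i) (Finsupp.single (p i) (α i))) ≤ lnorm (σ i) * ‖α i‖ := by
      intro i
      cases hσ : σ i with
      | nil =>
        refine (h0 _).trans ?_
        have := Bnorm_diff_le 0 ([] : List E) (p i) (α i) (le_refl 0)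
        simpa using this
      | cons u τ =>
        have hτ : τ.length ≤ r - 1 := by
          have := hlen i
          rw [hσ] at this
          simp only [List.length_cons] at this
          omega
        calc s (del u (diff τ (Finsupp.single (p i) (α i))))
            ≤ ‖u‖ * Bnorm (r - 1) (diff τ (Finsupp.single (p i) (α i))) := h1 u _
          _ ≤ ‖u‖ * (lnorm τ * ‖α i‖) := by
              apply mul_le_mul_of_nonneg_left (Bnorm_diff_le _ _ _ _ hτ) (norm_nonneg u)
          _ = lnorm (u :: τ) * ‖α i‖ := by rw [lnorm_cons]; ring
    calc s A = s (∑ i, diff (σ i) (Finsupp.single (p i) (α i))) := by rw [hA]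
      _ ≤ ∑ i, s (diff (σ i) (Finsupp.single (p i) (α i))) := seminorm_sum_le s _ _
      _ ≤ ∑ i, lnorm (σ i) * ‖α i‖ := Finset.sum_le_sum fun i _ => term i
      _ = c := hc.symm
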